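/- Let K ∈ ℝ^{n×n} be symmetric positive definite, b ∈ ℝ^n, and let p⁰, …, p^{n−1} be a K-conjugate set of nonzero vectors. Starting from any x⁰ and iterating x^{k+1} = x^k + α^k p^k with α^k = −((Kx^k − b)ᵀp^k)/((p^k)ᵀKp^k), the iterate x^n satisfies Kx^n = b. -/

import Mathlib

open Matrix

private lemma cd_mulVec_sum {n : ℕ} (K : Matrix (Fin n) (Fin n) ℝ)
    (s : Finset (Fin n)) (f : Fin n → Fin n → ℝ) :
    K.mulVec (∑ i ∈ s, f i) = ∑ i ∈ s, K.mulVec (f i) := map_sum K.mulVecLin f s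

private lemma cd_dot_sum {n : ℕ} (v : Fin n → ℝ) (s : Finset (Fin n))
    (f : Fin n → Fin n → ℝ) : v ⬝ᵥ (∑ i ∈ s, f i) = ∑ i ∈ s, v ⬝ᵥ f i := by
  simp [dotProduct, Finset.mul_sum]
  exact Finset.sum_comm

private lemma cd_sym {n : ℕ} (K : Matrix (Fin n) (Fin n) ℝ) (hK : K.PosDef)
    (u v : Fin n → ℝ) : K.mulVec u ⬝ᵥ v = u ⬝ᵥ K.mulVec v := by
  have h : Kᵀ = K := by simpa using hK.isHermitian.eq
  rw [dotProduct_comm, dotProduct_mulVec, ← h, vecMul_transpose, dotProduct_comm, h]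

/-- Finite termination of the conjugate directions method: after `n` exact line
minimizations along `K`-conjugate directions, the iterate solves `K x = b`. -/
theorem conjugate_directions_finite_termination (n : ℕ)
    (K : Matrix (Fin n) (Fin n) ℝ) (hK : K.PosDef) (b : Fin n → ℝ)
    (p : Fin n → Fin n → ℝ)
    (hnz : ∀ i, p i ≠ 0)
    (hconj : ∀ i j, i ≠ j → p i ⬝ᵥ K.mulVec (p j) = 0)
    (x : ℕ → Fin n → ℝ)
    (hiter : ∀ k : Fin n,
      x (k + 1) = x k +
        (-((K.mulVec (x k) - b) ⬝ᵥ p k) / (p k ⬝ᵥ K.mulVec (p k))) • p k) :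
    K.mulVec (x n) = b := by
  rcases Nat.eq_zero_or_pos n with hn | hn
  · subst hn
    funext i
    exact absurd i.2 (by omega)
  have hne : Nonempty (Fin n) := ⟨⟨0, hn⟩⟩
  -- positivity of the curvature terms
  have hd : ∀ i : Fin n, 0 < p i ⬝ᵥ K.mulVec (p i) := by
    intro i
    have := hK.dotProduct_mulVec_pos (hnz i)
    simpa using this
  -- the residual
  set r : ℕ → Fin n → ℝ := fun m => K.mulVec (x m) - b with hr
  -- one step of the residual recurrence
  have hstep : ∀ k : Fin n, ∀ j : Fin n,
      r (k + 1) ⬝ᵥ p j = r k ⬝ᵥ p j +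
        (-(r k ⬝ᵥ p k) / (p k ⬝ᵥ K.mulVec (p k))) * (K.mulVec (p k) ⬝ᵥ p j) := by
    intro k j
    have h1 : r (↑k + 1) = r k +
        (-(r k ⬝ᵥ p k) / (p k ⬝ᵥ K.mulVec (p k))) • K.mulVec (p k) := by
      simp only [hr]
      rw [hiter k, mulVec_add, mulVec_smul]
      abel
    rw [h1, add_dotProduct, smul_dotProduct, smul_eq_mul]
  -- orthogonality of residuals to previous directions
  have key : ∀ m : ℕ, m ≤ n → ∀ j : Fin n, (j : ℕ) < m → r m ⬝ᵥ p j = 0 := by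
    intro m
    induction m with
    | zero => intro _ j hj; omega
    | succ m ih =>
      intro hm j hj
      have hmn : m < n := by omega
      set k : Fin n := ⟨m, hmn⟩ with hk
      have hcast : (m : ℕ) + 1 = (k : ℕ) + 1 := rfl
      rcases Nat.lt_or_ge (j : ℕ) m with hjm | hjm
      · -- j < m : use induction hypothesis and conjugacy
        have h0 : r m ⬝ᵥ p j = 0 := ih (by omega) j hjm
        have hkj : k ≠ j := by
          intro h
          rw [← h] at hjm
          simp [hk] at hjm
        have hc : K.mulVec (p k) ⬝ᵥ p j = 0 := by
          rw [cd_sym K hK]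
          exact hconj k j hkj
        rw [hcast, hstep k j]
        simp only [hk]
        rw [hc, h0]
        ring
      · -- j = m : exact line minimization
        have hjk : j = k := by
          apply Fin.ext
          simp [hk]
          omega
        subst hjk
        rw [hcast, hstep k k]
        have hKd : K.mulVec (p k) ⬝ᵥ p k = p k ⬝ᵥ K.mulVec (p k) := by
          rw [dotProduct_comm]
        rw [hKd, div_mul_cancel₀ _ (hd k).ne', add_neg_cancel]
  -- the final residual is orthogonal to all directions
  have hall : ∀ j : Fin n, r n ⬝ᵥ p j = 0 := fun j => key n le_rfl j j.2
  -- the directions are linearly independent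
  have hli : LinearIndependent ℝ p := by
    rw [Fintype.linearIndependent_iff]
    intro g hg j
    have h1 : p j ⬝ᵥ K.mulVec (∑ i, g i • p i) = 0 := by
      rw [hg]; simp
    rw [cd_mulVec_sum, cd_dot_sum] at h1
    have h2 : ∀ i ∈ Finset.univ, i ≠ j → p j ⬝ᵥ K.mulVec (g i • p i) = 0 := by
      intro i _ hij
      rw [mulVec_smul, dotProduct_smul, smul_eq_mul, hconj j i (Ne.symm hij), mul_zero]
    rw [Finset.sum_eq_single_of_mem j (Finset.mem_univ j) (fun i hi hij => h2 i hi hij)] at h1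
    rw [mulVec_smul, dotProduct_smul, smul_eq_mul] at h1
    rcases mul_eq_zero.mp h1 with h | h
    · exact h
    · exact absurd h (ne_of_gt (hd j))
  -- they form a basis since there are `n` of them
  have hcard : Fintype.card (Fin n) = Module.finrank ℝ (Fin n → ℝ) := by simp
  set B := basisOfLinearIndependentOfCardEqFinrank hli hcard with hB
  have hBe : ∀ i, B i = p i := fun i => by
    rw [hB, coe_basisOfLinearIndependentOfCardEqFinrank]
  -- expand r n in the basis and conclude r n = 0
  have hrn : r n = 0 := by
    have hrepr := B.sum_repr (r n)
    have hself : r n ⬝ᵥ r n = 0 := by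
      nth_rewrite 2 [← hrepr]
      rw [cd_dot_sum]
      apply Finset.sum_eq_zero
      intro i _
      rw [hBe i, dotProduct_smul, smul_eq_mul, hall i, mul_zero]
    exact dotProduct_self_eq_zero.mp hself
  have := hrn
  rw [hr] at this
  simpa [sub_eq_zero] using this
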